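/- arXiv:math-ph/0005032 — 2 statements merged into one kernel-verified Lean document; each statement's English description precedes it below -/
import Mathlib

section
/- If A : ℝ → GL(n,ℂ) is a continuous one-parameter group, i.e., A(0) = I and A(t+s) = A(t)A(s) for all real t,s, then there exists a unique n×n complex matrix X such that A(t) = e^{tX} for all t ∈ ℝ. -/
open NormedSpace

open scoped Matrix.Norms.L2Operator

/-- **One-parameter subgroups**: if `A : ℝ → Matrix n n ℂ` is continuous, takes
values in the invertible matrices, with `A 0 = I` and `A (t+s) = A t * A s`,
then there is a unique matrix `X` with `A t = e^{tX}` for all `t`. -/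
theorem one_parameter_subgroup (n : ℕ) (A : ℝ → Matrix (Fin n) (Fin n) ℂ)
    (hcont : Continuous A) (hunit : ∀ t, IsUnit (A t)) (h0 : A 0 = 1)
    (hadd : ∀ t s : ℝ, A (t + s) = A t * A s) :
    ∃! X : Matrix (Fin n) (Fin n) ℂ, ∀ t : ℝ, A t = exp ((t : ℂ) • X) := by
  classical
  -- derivative of `t ↦ exp ((t : ℂ) • Y)` as a function of a real variable
  have hexp : ∀ (Y : (Matrix (Fin n) (Fin n) ℂ)) (t : ℝ),
      HasDerivAt (fun t : ℝ => exp ((t : ℂ) • Y)) (exp ((t : ℂ) • Y) * Y) t := by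
    intro Y t
    have h1 : HasDerivAt (fun c : ℂ => exp (c • Y)) (exp (((t : ℝ) : ℂ) • Y) * Y)
        ((t : ℝ) : ℂ) := hasDerivAt_exp_smul_const Y ((t : ℝ) : ℂ)
    have h2 : HasDerivAt (fun t : ℝ => (t : ℂ)) 1 t := by
      exact Complex.ofRealCLM.hasDerivAt (x := t)
    have h3 := h1.scomp t h2
    simp only [one_smul] at h3
    exact h3
  -- integrability
  have hint : ∀ a b : ℝ, IntervalIntegrable A MeasureTheory.volume a b := fun a b =>
    hcont.intervalIntegrable a b
  set g : ℝ → (Matrix (Fin n) (Fin n) ℂ) := fun t => ∫ s in (0 : ℝ)..t, A s with hg_def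
  have hg : ∀ t, HasDerivAt g (A t) t := fun t =>
    intervalIntegral.integral_hasDerivAt_right (hint 0 t)
      (hcont.stronglyMeasurableAtFilter _ _) hcont.continuousAt
  have hg0 : g 0 = 0 := intervalIntegral.integral_same
  -- choose a small `ε ≠ 0` such that `g ε` is invertible
  have hslope : Filter.Tendsto (slope g 0) (nhdsWithin 0 {(0 : ℝ)}ᶜ) (nhds (1 : (Matrix (Fin n) (Fin n) ℂ))) := by
    have h := (hasDerivAt_iff_tendsto_slope).1 (hg 0)
    rwa [h0] at h
  have hev : ∀ᶠ ε in nhdsWithin 0 {(0 : ℝ)}ᶜ, IsUnit (slope g 0 ε) :=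
    hslope.eventually (Units.nhds (1 : (Matrix (Fin n) (Fin n) ℂ)ˣ))
  obtain ⟨ε, hεu, hε0⟩ : ∃ ε : ℝ, IsUnit (slope g 0 ε) ∧ ε ≠ 0 := by
    have h := hev.and (eventually_mem_nhdsWithin (s := {(0 : ℝ)}ᶜ) (a := (0 : ℝ)))
    obtain ⟨ε, h1, h2⟩ := h.exists
    exact ⟨ε, h1, h2⟩
  have hgε : g ε = ε • slope g 0 ε := by
    rw [slope_def_module, hg0, sub_zero, sub_zero, smul_inv_smul₀ hε0]
  have hB : IsUnit (g ε) := by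
    rw [hgε, Algebra.smul_def]
    exact ((isUnit_iff_ne_zero.2 hε0).map (algebraMap ℝ (Matrix (Fin n) (Fin n) ℂ))).mul hεu
  set u : (Matrix (Fin n) (Fin n) ℂ)ˣ := hB.unit with hu
  have huval : (u : (Matrix (Fin n) (Fin n) ℂ)) = g ε := rfl
  -- key identity
  have key : ∀ t, A t * g ε = g (t + ε) - g t := by
    intro t
    have h1 : A t * g ε = ∫ s in (0 : ℝ)..ε, A t * A s := by
      exact ((ContinuousLinearMap.mul ℂ (Matrix (Fin n) (Fin n) ℂ) (A t)).intervalIntegral_comp_comm (hint 0 ε)).symm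
    have h2 : (∫ s in (0 : ℝ)..ε, A t * A s) = ∫ s in (0 : ℝ)..ε, A (t + s) := by
      simp [hadd]
    have h3 : (∫ s in (0 : ℝ)..ε, A (t + s)) = ∫ s in t..(t + ε), A s := by
      simpa using intervalIntegral.integral_comp_add_left (a := (0 : ℝ)) (b := ε) A t
    have h4 : g (t + ε) - g t = ∫ s in t..(t + ε), A s :=
      intervalIntegral.integral_interval_sub_left (hint 0 (t + ε)) (hint 0 t)
    rw [h1, h2, h3, ← h4]
  set X : (Matrix (Fin n) (Fin n) ℂ) := (A ε - 1) * (↑u⁻¹ : Matrix (Fin n) (Fin n) ℂ) with hX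
  -- A is differentiable with A' t = A t * X
  have hA' : ∀ t, HasDerivAt A (A t * X) t := by
    intro t
    have h1 : HasDerivAt (fun t => g (t + ε)) (A (t + ε)) t := by
      have h3 := (hg (t + ε)).scomp t ((hasDerivAt_id t).add_const ε)
      simp only [one_smul] at h3
      exact h3
    have h2 : HasDerivAt (fun t => (g (t + ε) - g t) * (↑u⁻¹ : (Matrix (Fin n) (Fin n) ℂ)))
        ((A (t + ε) - A t) * (↑u⁻¹ : (Matrix (Fin n) (Fin n) ℂ))) t := (h1.sub (hg t)).mul_const _
    have heq : (fun t => (g (t + ε) - g t) * (↑u⁻¹ : (Matrix (Fin n) (Fin n) ℂ))) = A := by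
      funext s
      rw [← key s, mul_assoc, ← huval, Units.mul_inv, mul_one]
    rw [heq] at h2
    convert h2 using 1
    rw [hadd t ε, hX, ← mul_assoc, mul_sub, mul_one]
  -- existence
  have main : ∀ t, A t = exp ((t : ℂ) • X) := by
    have hf' : ∀ t, HasDerivAt (fun t => A t * exp ((t : ℂ) • (-X))) 0 t := by
      intro t
      have h := (hA' t).mul (hexp (-X) t)
      have hc : Commute (exp ((t : ℂ) • (-X))) X :=
        ((((Commute.refl X).neg_left).smul_left ((t : ℂ))).exp_left)
      have hz : A t * X * exp ((t : ℂ) • (-X)) +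
          A t * (exp ((t : ℂ) • (-X)) * (-X)) = 0 := by
        rw [mul_neg, hc.eq, mul_neg, mul_assoc (A t) X, add_neg_cancel]
      rwa [hz] at h
    have hconst : ∀ t, A t * exp ((t : ℂ) • (-X)) = A 0 * exp (((0 : ℝ) : ℂ) • (-X)) :=
      fun t => is_const_of_deriv_eq_zero (fun x => (hf' x).differentiableAt)
        (fun x => (hf' x).deriv) t 0
    intro t
    have h1 : A t * exp ((t : ℂ) • (-X)) = 1 := by
      rw [hconst t, h0]
      simp [exp_zero]
    have hcomm : Commute ((t : ℂ) • (-X)) ((t : ℂ) • X) :=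
      (((Commute.refl X).neg_left).smul_left ((t : ℂ))).smul_right ((t : ℂ))
    have h2 : exp ((t : ℂ) • (-X)) * exp ((t : ℂ) • X) = 1 := by
      rw [← Matrix.exp_add_of_commute _ _ hcomm, ← smul_add, neg_add_cancel, smul_zero, exp_zero]
    calc A t = A t * (exp ((t : ℂ) • (-X)) * exp ((t : ℂ) • X)) := by rw [h2, mul_one]
      _ = A t * exp ((t : ℂ) • (-X)) * exp ((t : ℂ) • X) := by rw [mul_assoc]
      _ = exp ((t : ℂ) • X) := by rw [h1, one_mul]
  refine ⟨X, main, ?_⟩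
  intro Y hY
  have h1 : HasDerivAt (fun t : ℝ => exp ((t : ℂ) • Y)) Y 0 := by
    simpa using hexp Y 0
  have h2 : HasDerivAt (fun t : ℝ => exp ((t : ℂ) • Y)) X 0 := by
    have : (fun t : ℝ => exp ((t : ℂ) • Y)) = fun t : ℝ => exp ((t : ℂ) • X) := by
      funext s
      rw [← hY s, ← main s]
    rw [this]
    simpa using hexp X 0
  exact h1.unique h2
end

section
/- Let X be an n×n complex matrix and (C_m) a sequence of n×n complex matrices with ‖C_m‖ ≤ K/m² for some constant K. Then lim_{m→∞} (I + X/m + C_m)^m = e^X. -/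
open NormedSpace Nat

attribute [local instance]
  Matrix.linftyOpNormedAddCommGroup Matrix.linftyOpNormedRing
  Matrix.linftyOpNormedSpace Matrix.linftyOpNormedAlgebra

lemma aux_norm_pow_le {A : Type*} [NormedRing A] (h1 : ‖(1:A)‖ ≤ 1) (y : A) (m : ℕ) :
    ‖y ^ m‖ ≤ ‖y‖ ^ m := by
  cases m with
  | zero => simpa using h1
  | succ m => exact norm_pow_le' y m.succ_pos

lemma aux_pow_sub_pow {R : Type*} [NormedRing R] (a b : R) {Mv d : ℝ} (h1 : ‖(1:R)‖ ≤ 1)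
    (hM : 1 ≤ Mv) (ha : ‖a‖ ≤ Mv) (hb : ‖b‖ ≤ Mv) (hd : ‖a - b‖ ≤ d) :
    ∀ k : ℕ, ‖a ^ k - b ^ k‖ ≤ k * Mv ^ k * d := by
  have hd0 : 0 ≤ d := le_trans (norm_nonneg _) hd
  have hM0 : 0 ≤ Mv := le_trans zero_le_one hM
  intro k
  induction k with
  | zero => simp
  | succ k ih =>
    have hak : ‖a ^ k‖ ≤ Mv ^ k := by
      refine (aux_norm_pow_le h1 a k).trans (pow_le_pow_left₀ (norm_nonneg a) ha _)
    have key : a ^ (k+1) - b ^ (k+1) = a ^ k * (a - b) + (a ^ k - b ^ k) * b := by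
      noncomm_ring
    calc ‖a ^ (k+1) - b ^ (k+1)‖ ≤ ‖a ^ k * (a - b)‖ + ‖(a ^ k - b ^ k) * b‖ := by
          rw [key]; exact norm_add_le _ _
      _ ≤ Mv ^ k * d + (k * Mv ^ k * d) * Mv :=
          add_le_add (le_trans (norm_mul_le _ _)
              (mul_le_mul hak hd (norm_nonneg _) (by positivity)))
            (le_trans (norm_mul_le _ _)
              (mul_le_mul ih hb (norm_nonneg _) (by positivity)))
      _ ≤ (k+1 : ℕ) * Mv ^ (k+1) * d := by
          push_cast
          have h1' : Mv ^ k * d ≤ Mv ^ (k+1) * d := by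
            apply mul_le_mul_of_nonneg_right _ hd0
            exact pow_le_pow_right₀ hM (Nat.le_succ k)
          have e : (k:ℝ) * Mv ^ k * d * Mv = (k:ℝ) * Mv ^ (k+1) * d := by
            rw [pow_succ]; ring
          linarith

section ExpBounds

variable {A : Type*} [NormedRing A] [NormedAlgebra ℂ A] [CompleteSpace A]

omit [CompleteSpace A] in
lemma aux_coeff_norm (h1 : ‖(1:A)‖ ≤ 1) (y : A) (m : ℕ) :
    ‖((m ! : ℂ)⁻¹) • y ^ m‖ ≤ ‖y‖ ^ m / m ! := by
  rw [norm_smul, norm_inv, Complex.norm_natCast, div_eq_inv_mul]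
  gcongr
  exact aux_norm_pow_le h1 y m

lemma aux_real_exp (t : ℝ) : Real.exp t = ∑' m : ℕ, t ^ m / m ! := by
  rw [Real.exp_eq_exp_ℝ, exp_eq_tsum_div]

lemma aux_norm_exp_le (h1 : ‖(1:A)‖ ≤ 1) (y : A) : ‖exp y‖ ≤ Real.exp ‖y‖ := by
  have h := exp_series_hasSum_exp' (𝕂 := ℂ) y
  rw [← h.tsum_eq, aux_real_exp]
  refine (norm_tsum_le_tsum_norm ?_).trans (Summable.tsum_le_tsum (aux_coeff_norm h1 y) ?_ ?_)
  · exact Summable.of_nonneg_of_le (fun m => norm_nonneg _) (aux_coeff_norm h1 y)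
      (Real.summable_pow_div_factorial ‖y‖)
  · exact Summable.of_nonneg_of_le (fun m => norm_nonneg _) (aux_coeff_norm h1 y)
      (Real.summable_pow_div_factorial ‖y‖)
  · exact Real.summable_pow_div_factorial ‖y‖

lemma aux_exp_sub_one_sub (h1 : ‖(1:A)‖ ≤ 1) (y : A) :
    ‖exp y - 1 - y‖ ≤ ‖y‖ ^ 2 * Real.exp ‖y‖ := by
  set f : ℕ → A := fun m => ((m ! : ℂ)⁻¹) • y ^ m with hf
  have h0 : HasSum f (exp y) := exp_series_hasSum_exp' (𝕂 := ℂ) y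
  have h2 : HasSum (fun m => f (m + 2)) (exp y - 1 - y) := by
    refine (hasSum_nat_add_iff (f := f) (g := exp y - 1 - y) 2).mpr ?_
    convert h0 using 1
    · rfl
    have e0 : f 0 = 1 := by simp [hf]
    have e1 : f 1 = y := by simp [hf]
    rw [Finset.sum_range_succ, Finset.sum_range_one, e0, e1]
    abel
  have hbound : ∀ m : ℕ, ‖f (m + 2)‖ ≤ ‖y‖ ^ 2 * (‖y‖ ^ m / m !) := by
    intro m
    refine (aux_coeff_norm h1 y (m + 2)).trans ?_
    calc (‖y‖ ^ (m + 2) : ℝ) / (m + 2)! ≤ ‖y‖ ^ (m + 2) / m ! := by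
          apply div_le_div_of_nonneg_left (by positivity) (by positivity)
          exact_mod_cast Nat.factorial_le (by omega)
      _ = ‖y‖ ^ 2 * (‖y‖ ^ m / m !) := by rw [pow_add]; ring
  have hs : Summable fun m => ‖y‖ ^ 2 * (‖y‖ ^ m / m !) :=
    (Real.summable_pow_div_factorial ‖y‖).mul_left _
  have hsn : Summable fun m => ‖f (m + 2)‖ :=
    Summable.of_nonneg_of_le (fun m => norm_nonneg _) hbound hs
  calc ‖exp y - 1 - y‖ = ‖∑' m, f (m + 2)‖ := by rw [h2.tsum_eq]
    _ ≤ ∑' m, ‖f (m + 2)‖ := norm_tsum_le_tsum_norm hsn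
    _ ≤ ∑' m, ‖y‖ ^ 2 * (‖y‖ ^ m / m !) := Summable.tsum_le_tsum hbound hsn hs
    _ = ‖y‖ ^ 2 * Real.exp ‖y‖ := by rw [tsum_mul_left, aux_real_exp]

end ExpBounds

/-- If `‖C m‖ ≤ K / m²` for all `m ≥ 1`, then
`(I + X/m + C m)^m → e^X` as `m → ∞`. -/
theorem tendsto_one_add_div_pow_exp (n : ℕ) (X : Matrix (Fin n) (Fin n) ℂ)
    (C : ℕ → Matrix (Fin n) (Fin n) ℂ) (K : ℝ)
    (hC : ∀ m : ℕ, 1 ≤ m → ‖C m‖ ≤ K / (m : ℝ) ^ 2) :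
    Filter.Tendsto (fun m : ℕ => (1 + (m : ℂ)⁻¹ • X + C m) ^ m)
      Filter.atTop (nhds (exp X)) := by
  have h1 : ‖(1 : Matrix (Fin n) (Fin n) ℂ)‖ ≤ 1 := by
    rw [← Matrix.diagonal_one, Matrix.linfty_opNorm_diagonal]
    exact (pi_norm_le_iff_of_nonneg zero_le_one).mpr fun i => by simp
  set K' := max K 0 with hK'def
  have hK' : (0:ℝ) ≤ K' := le_max_right _ _
  set c : ℝ := K' + ‖X‖ ^ 2 * Real.exp ‖X‖ with hcdef
  have hc0 : (0:ℝ) ≤ c := by positivity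
  set L : ℝ := ‖X‖ + K' with hLdef
  have hL0 : (0:ℝ) ≤ L := by positivity
  rw [← tendsto_sub_nhds_zero_iff]
  apply squeeze_zero_norm' (a := fun m : ℕ => Real.exp L * c / m)
  · filter_upwards [Filter.eventually_ge_atTop 1] with m hm
    have hm0 : (0:ℝ) < m := by exact_mod_cast hm
    have hm1 : (1:ℝ) ≤ m := by exact_mod_cast hm
    set y : Matrix (Fin n) (Fin n) ℂ := (m : ℂ)⁻¹ • X with hy
    have hyn : ‖y‖ = ‖X‖ / m := by
      rw [hy, norm_smul, norm_inv, Complex.norm_natCast, div_eq_inv_mul]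
    have hyX : ‖y‖ ≤ ‖X‖ := by
      rw [hyn]; exact div_le_self (norm_nonneg X) hm1
    have hbm : exp y ^ m = exp X := by
      refine (exp_nsmul m y).symm.trans ?_
      rw [← Nat.cast_smul_eq_nsmul ℂ m y, hy, smul_smul,
        mul_inv_cancel₀ (by exact_mod_cast hm0.ne' : (m:ℂ) ≠ 0), one_smul]
      rfl
    set a : Matrix (Fin n) (Fin n) ℂ := 1 + y + C m with ha
    set b : Matrix (Fin n) (Fin n) ℂ := exp y with hb
    have hCm : ‖C m‖ ≤ K' / m ^ 2 := (hC m hm).trans (by gcongr; exact le_max_left _ _)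
    have hCm' : ‖C m‖ ≤ K' / m := hCm.trans (by
      apply div_le_div_of_nonneg_left hK' hm0
      nlinarith)
    have hMa : ‖a‖ ≤ Real.exp (L / m) := by
      calc ‖a‖ ≤ ‖1 + y‖ + ‖C m‖ := norm_add_le _ _
        _ ≤ ‖(1 : Matrix (Fin n) (Fin n) ℂ)‖ + ‖y‖ + ‖C m‖ := by
            gcongr; exact norm_add_le _ _
        _ ≤ 1 + ‖X‖ / m + K' / m := by rw [hyn]; gcongr
        _ = L / m + 1 := by rw [hLdef]; ring
        _ ≤ Real.exp (L / m) := Real.add_one_le_exp _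
    have hMb : ‖b‖ ≤ Real.exp (L / m) := by
      refine (aux_norm_exp_le h1 y).trans (Real.exp_le_exp.mpr ?_)
      rw [hyn, hLdef]
      gcongr
      linarith
    have hd : ‖a - b‖ ≤ c / m ^ 2 := by
      have e : a - b = C m - (b - 1 - y) := by rw [ha]; abel
      calc ‖a - b‖ ≤ ‖C m‖ + ‖b - 1 - y‖ := by rw [e]; exact norm_sub_le _ _
        _ ≤ K' / m ^ 2 + ‖y‖ ^ 2 * Real.exp ‖y‖ :=
            add_le_add hCm (aux_exp_sub_one_sub h1 y)
        _ ≤ K' / m ^ 2 + (‖X‖ / m) ^ 2 * Real.exp ‖X‖ := by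
            rw [hyn]
            gcongr
            exact div_le_self (norm_nonneg X) hm1
        _ = c / m ^ 2 := by rw [hcdef]; field_simp
    have hexp1 : (1:ℝ) ≤ Real.exp (L / m) := Real.one_le_exp (by positivity)
    have key := aux_pow_sub_pow a b h1 hexp1 hMa hMb hd m
    have hexpm : Real.exp (L / m) ^ m = Real.exp L := by
      rw [← Real.exp_nat_mul, mul_div_cancel₀ _ hm0.ne']
    calc ‖a ^ m - exp X‖ = ‖a ^ m - b ^ m‖ := by rw [hbm]
      _ ≤ m * Real.exp (L / m) ^ m * (c / m ^ 2) := key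
      _ = Real.exp L * c / m := by rw [hexpm]; field_simp
  · exact tendsto_const_div_atTop_nhds_zero_nat _
end
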